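/- In the circuit F* constructed from a type-respecting simplified clique decomposition of a circuit F, every directed path between two original gates whose internal vertices contain no original gates contains exactly one adjacency wire. -/

import Mathlib

/-- A simplified clique decomposition (scd), presented as the term generating
the final labeled graph: leaves introduce single vertices with a singleton
label, binary nodes take disjoint unions, and unary nodes add a new vertex,
unite two labels, or add all edges (arcs) between two labels. -/
inductive SCD (V : Type) where
  | leaf (v : V) : SCD V
  | union (l r : SCD V) : SCD V
  | addVertex (t : SCD V) (v : V) : SCD V
  | unite (t : SCD V) (S₁ S₂ : Finset V) : SCD V
  | addAdj (t : SCD V) (S₁ S₂ : Finset V) : SCD V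

variable {V : Type} [DecidableEq V]

/-- The vertex set of the labeled graph produced by an scd. -/
def SCD.verts : SCD V → Finset V
  | .leaf v => {v}
  | .union l r => l.verts ∪ r.verts
  | .addVertex t v => t.verts ∪ {v}
  | .unite t _ _ => t.verts
  | .addAdj t _ _ => t.verts

/-- The set of labels (the partition of the vertices) of the graph produced. -/
def SCD.labels : SCD V → Finset (Finset V)
  | .leaf v => {{v}}
  | .union l r => l.labels ∪ r.labels
  | .addVertex t v => t.labels ∪ {{v}}
  | .unite t S₁ S₂ => (t.labels \ {S₁, S₂}) ∪ {S₁ ∪ S₂}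
  | .addAdj t _ _ => t.labels

/-- Well-formedness of an scd: unions are of vertex-disjoint graphs, added
vertices are new, and the unite/new-adjacency operations are applied to two
distinct existing labels. -/
def SCD.WF : SCD V → Prop
  | .leaf _ => True
  | .union l r => l.WF ∧ r.WF ∧ Disjoint l.verts r.verts
  | .addVertex t v => t.WF ∧ v ∉ t.verts
  | .unite t S₁ S₂ => t.WF ∧ S₁ ∈ t.labels ∧ S₂ ∈ t.labels ∧ S₁ ≠ S₂
  | .addAdj t S₁ S₂ => t.WF ∧ S₁ ∈ t.labels ∧ S₂ ∈ t.labels ∧ S₁ ≠ S₂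

/-- The set 𝐒(T,𝐆) of all labels appearing at any node of the decomposition. -/
def SCD.allLabels : SCD V → Finset (Finset V)
  | .leaf v => {{v}}
  | .union l r => l.allLabels ∪ r.allLabels
  | .addVertex t v => t.allLabels ∪ {{v}}
  | .unite t S₁ S₂ => t.allLabels ∪ {S₁ ∪ S₂}
  | .addAdj t _ _ => t.allLabels

/-- `T.isChild S₁ S₂`: the label `S₂` was created by uniting `S₁` with another
label somewhere in the decomposition (so `S₁` is a child of `S₂`). -/
def SCD.isChild : SCD V → Finset V → Finset V → Prop
  | .leaf _ => fun _ _ => False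
  | .union l r => fun A B => l.isChild A B ∨ r.isChild A B
  | .addVertex t _ => t.isChild
  | .unite t S₁ S₂ => fun A B => t.isChild A B ∨ ((A = S₁ ∨ A = S₂) ∧ B = S₁ ∪ S₂)
  | .addAdj t _ _ => t.isChild

/-- `T.isAdjArc S₁ S₂`: the new-adjacency operation was applied somewhere in the
decomposition, introducing all arcs from the label `S₁` to the label `S₂`. -/
def SCD.isAdjArc : SCD V → Finset V → Finset V → Prop
  | .leaf _ => fun _ _ => False
  | .union l r => fun A B => l.isAdjArc A B ∨ r.isAdjArc A B
  | .addVertex t _ => t.isAdjArc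
  | .unite t _ _ => t.isAdjArc
  | .addAdj t S₁ S₂ => fun A B => t.isAdjArc A B ∨ (A = S₁ ∧ B = S₂)

/-- The three kinds of gates associated with a label of the decomposition. -/
inductive GK where
  | oand : GK
  | oor : GK
  | inn : GK
deriving DecidableEq

/-- Gates of the circuit `F*` are pairs (label, kind); for a singleton label
the three gates coincide with the original gate, canonically represented with
kind `oand`. -/
def canon (p : Finset V × GK) : Finset V × GK :=
  if p.1.card = 1 then (p.1, GK.oand) else p

/-- An original gate of `F*`: the gate corresponding to a singleton label. -/
def OriginalGate (T : SCD V) (g : Finset V × GK) : Prop :=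
  ∃ v : V, ({v} : Finset V) ∈ T.allLabels ∧ g = ({v}, GK.oand)

/-- The three kinds of wires of `F*`. -/
inductive WKind where
  | cp : WKind   -- child-parent wire
  | pc : WKind   -- parent-child wire
  | adj : WKind  -- adjacency wire
deriving DecidableEq

/-- The wires of `F*`: child-parent wires from `oand`/`oor` of a child label to
that of its parent; parent-child wires from `in` of a parent label to `in` of a
child label; and, for each adjacency arc from `S₁` to `S₂`, an adjacency wire
from `oand(S₁)` or `oor(S₁)` (as chosen by `sel`) to `in(S₂)`. -/
def wire (T : SCD V) (sel : Finset V → Finset V → GK) :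
    WKind → Finset V × GK → Finset V × GK → Prop
  | .cp, g₁, g₂ => ∃ (S₁ S₂ : Finset V) (k : GK),
      (k = GK.oand ∨ k = GK.oor) ∧ T.isChild S₁ S₂ ∧
      g₁ = canon (S₁, k) ∧ g₂ = canon (S₂, k)
  | .pc, g₁, g₂ => ∃ S₁ S₂ : Finset V, T.isChild S₁ S₂ ∧
      g₁ = canon (S₂, GK.inn) ∧ g₂ = canon (S₁, GK.inn)
  | .adj, g₁, g₂ => ∃ S₁ S₂ : Finset V, T.isAdjArc S₁ S₂ ∧
      g₁ = canon (S₁, sel S₁ S₂) ∧ g₂ = canon (S₂, GK.inn)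

/-- `IsWalk step gs ws`: `gs` is a walk in the DAG of `F*` whose consecutive
gates are connected by wires of the kinds listed in `ws`. -/
def IsWalk {α : Type} (step : WKind → α → α → Prop) : List α → List WKind → Prop
  | [_], [] => True
  | a :: b :: rest, w :: ws => step w a b ∧ IsWalk step (b :: rest) ws
  | _, _ => False

section Aux

/-- Labels are always nonempty. -/
lemma SCD.labels_nonempty (T : SCD V) (hWF : T.WF) :
    ∀ S ∈ T.labels, S.Nonempty := by
  induction T with
  | leaf v => intro S hS; simp [SCD.labels] at hS; subst hS; exact Finset.singleton_nonempty v
  | union l r ihl ihr =>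
    intro S hS
    simp [SCD.labels] at hS
    obtain ⟨h1, h2, _⟩ := hWF
    rcases hS with h | h
    · exact ihl h1 S h
    · exact ihr h2 S h
  | addVertex t v ih =>
    intro S hS
    simp [SCD.labels] at hS
    obtain ⟨h1, _⟩ := hWF
    rcases hS.symm with h | h
    · exact ih h1 S h
    · subst h; exact Finset.singleton_nonempty v
  | unite t S₁ S₂ ih =>
    intro S hS
    simp [SCD.labels] at hS
    obtain ⟨h1, hS₁, _, _⟩ := hWF
    rcases hS.symm with ⟨h, _⟩ | h
    · exact ih h1 S h
    · subst h
      exact (ih h1 S₁ hS₁).mono Finset.subset_union_left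
  | addAdj t S₁ S₂ ih =>
    intro S hS
    simp [SCD.labels] at hS
    exact ih hWF.1 S hS

/-- Labels are among all labels. -/
lemma SCD.labels_subset_allLabels (T : SCD V) : T.labels ⊆ T.allLabels := by
  induction T with
  | leaf v => simp [SCD.labels, SCD.allLabels]
  | union l r ihl ihr =>
    simp only [SCD.labels, SCD.allLabels]
    exact Finset.union_subset_union ihl ihr
  | addVertex t v ih =>
    simp only [SCD.labels, SCD.allLabels]
    exact Finset.union_subset_union ih (le_refl _)
  | unite t S₁ S₂ ih =>
    simp only [SCD.labels, SCD.allLabels]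
    exact Finset.union_subset_union ((Finset.sdiff_subset).trans ih) (le_refl _)
  | addAdj t S₁ S₂ ih =>
    simpa [SCD.labels, SCD.allLabels] using ih

lemma SCD.isChild_spec (T : SCD V) (hWF : T.WF) {A B : Finset V}
    (h : T.isChild A B) : A ∈ T.allLabels ∧ 2 ≤ B.card := by
  induction T with
  | leaf v => exact absurd h (by simp [SCD.isChild])
  | union l r ihl ihr =>
    obtain ⟨h1, h2, _⟩ := hWF
    rcases h with h | h
    · obtain ⟨hm, hc⟩ := ihl h1 h
      exact ⟨Finset.mem_union_left _ hm, hc⟩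
    · obtain ⟨hm, hc⟩ := ihr h2 h
      exact ⟨Finset.mem_union_right _ hm, hc⟩
  | addVertex t v ih =>
    obtain ⟨hm, hc⟩ := ih hWF.1 h
    exact ⟨Finset.mem_union_left _ hm, hc⟩
  | unite t S₁ S₂ ih =>
    obtain ⟨h1, hS₁, hS₂, hne⟩ := hWF
    rcases h with h | ⟨hA, hB⟩
    · obtain ⟨hm, hc⟩ := ih h1 h
      exact ⟨Finset.mem_union_left _ hm, hc⟩
    · constructor
      · apply Finset.mem_union_left
        apply SCD.labels_subset_allLabels
        rcases hA with rfl | rfl <;> assumption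
      · subst hB
        by_contra hlt
        push_neg at hlt
        interval_cases hc : (S₁ ∪ S₂).card
        · have hn1 := SCD.labels_nonempty t h1 S₁ hS₁
          have h0 : S₁ ∪ S₂ = ∅ := Finset.card_eq_zero.mp hc
          rw [Finset.union_eq_empty] at h0
          simp [h0.1] at hn1
        · obtain ⟨v, hv⟩ := Finset.card_eq_one.mp hc
          have hn1 := SCD.labels_nonempty t h1 S₁ hS₁
          have hn2 := SCD.labels_nonempty t h1 S₂ hS₂
          have e1 : S₁ = {v} := by
            apply Finset.eq_singleton_iff_nonempty_unique_mem.mpr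
            refine ⟨hn1, fun x hx => ?_⟩
            have : x ∈ S₁ ∪ S₂ := Finset.mem_union_left _ hx
            rw [hv] at this; simpa using this
          have e2 : S₂ = {v} := by
            apply Finset.eq_singleton_iff_nonempty_unique_mem.mpr
            refine ⟨hn2, fun x hx => ?_⟩
            have : x ∈ S₁ ∪ S₂ := Finset.mem_union_right _ hx
            rw [hv] at this; simpa using this
          exact hne (e1.trans e2.symm)
  | addAdj t S₁ S₂ ih =>
    obtain ⟨hm, hc⟩ := ih hWF.1 h
    exact ⟨hm, hc⟩

lemma SCD.isAdjArc_spec (T : SCD V) (hWF : T.WF) {A B : Finset V}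
    (h : T.isAdjArc A B) : B ∈ T.allLabels := by
  induction T with
  | leaf v => exact absurd h (by simp [SCD.isAdjArc])
  | union l r ihl ihr =>
    obtain ⟨h1, h2, _⟩ := hWF
    rcases h with h | h
    · exact Finset.mem_union_left _ (ihl h1 h)
    · exact Finset.mem_union_right _ (ihr h2 h)
  | addVertex t v ih => exact Finset.mem_union_left _ (ih hWF.1 h)
  | unite t S₁ S₂ ih => exact Finset.mem_union_left _ (ih hWF.1 h)
  | addAdj t S₁ S₂ ih =>
    obtain ⟨h1, hS₁, hS₂, hne⟩ := hWF
    rcases h with h | ⟨_, rfl⟩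
    · exact ih h1 h
    · exact SCD.labels_subset_allLabels t hS₂

lemma canon_of_card_ne {S : Finset V} {k : GK} (h : S.card ≠ 1) :
    canon (S, k) = (S, k) := by simp [canon, h]

lemma not_orig_canon (T : SCD V) {S : Finset V} (k : GK) (h2 : 2 ≤ S.card) :
    ¬ OriginalGate T (canon (S, k)) := by
  rintro ⟨v, _, heq⟩
  rw [canon_of_card_ne (by omega)] at heq
  have : S = {v} := congrArg Prod.fst heq
  rw [this] at h2; simp at h2

lemma canon_snd_ne_inn {S : Finset V} {k : GK} (hk : k ≠ GK.inn) :
    (canon (S, k)).2 ≠ GK.inn := by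
  rw [canon]
  split
  · simp
  · simpa using hk

lemma canon_orig_or_inn (T : SCD V) {S : Finset V} (hS : S ∈ T.allLabels) :
    OriginalGate T (canon (S, GK.inn)) ∨ (canon (S, GK.inn)).2 = GK.inn := by
  rw [canon]
  by_cases h : S.card = 1
  · left
    obtain ⟨v, rfl⟩ := Finset.card_eq_one.mp h
    exact ⟨v, hS, by simp [h]⟩
  · right; simp [h]

lemma in_phase (T : SCD V) (hWF : T.WF) (sel : Finset V → Finset V → GK)
    (hsel : ∀ A B, sel A B ≠ GK.inn)
    (l : List (Finset V × GK)) :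
    ∀ (g g₂ : Finset V × GK) (ws : List WKind),
    IsWalk (wire T sel) (g :: (l ++ [g₂])) ws → g.2 = GK.inn →
    (∀ x ∈ l, ¬ OriginalGate T x) → OriginalGate T g₂ →
    ws.count WKind.adj = 0 := by
  induction l with
  | nil =>
    intro g g₂ ws hwalk hin _ horig
    match ws with
    | [] => exact absurd hwalk (by simp [IsWalk])
    | w :: ws' =>
      obtain ⟨hwire, hrest⟩ := hwalk
      match ws' with
      | _ :: _ => exact absurd hrest (by simp [IsWalk])
      | [] =>
        cases w with
        | cp =>
          obtain ⟨S₁, S₂, k, hk, hch, hg, hg₂⟩ := hwire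
          have hc := (T.isChild_spec hWF hch).2
          exact absurd horig (hg₂ ▸ not_orig_canon T k hc)
        | pc => simp
        | adj =>
          obtain ⟨S₁, S₂, hadj, hg, _⟩ := hwire
          exact absurd hin (hg ▸ canon_snd_ne_inn (hsel S₁ S₂))
  | cons h l' ih =>
    intro g g₂ ws hwalk hin hmid horig
    match ws with
    | [] => exact absurd hwalk (by simp [IsWalk])
    | w :: ws' =>
      obtain ⟨hwire, hrest⟩ := hwalk
      cases w with
      | cp =>
        obtain ⟨S₁, S₂, k, hk, hch, hg, _⟩ := hwire
        have : g.2 ≠ GK.inn := hg ▸ canon_snd_ne_inn (by rcases hk with rfl | rfl <;> simp)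
        exact absurd hin this
      | adj =>
        obtain ⟨S₁, S₂, hadj, hg, _⟩ := hwire
        exact absurd hin (hg ▸ canon_snd_ne_inn (hsel S₁ S₂))
      | pc =>
        obtain ⟨S₁, S₂, hch, _, hh⟩ := hwire
        have hA := (T.isChild_spec hWF hch).1
        have hnext : OriginalGate T h ∨ h.2 = GK.inn := hh ▸ canon_orig_or_inn T hA
        have hno : ¬ OriginalGate T h := hmid h List.mem_cons_self
        have hin' : h.2 = GK.inn := hnext.resolve_left hno
        have := ih h g₂ ws' hrest hin' (fun x hx => hmid x (List.mem_cons_of_mem _ hx)) horig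
        simpa [this]

lemma out_phase (T : SCD V) (hWF : T.WF) (sel : Finset V → Finset V → GK)
    (hsel : ∀ A B, sel A B ≠ GK.inn)
    (l : List (Finset V × GK)) :
    ∀ (g g₂ : Finset V × GK) (ws : List WKind),
    IsWalk (wire T sel) (g :: (l ++ [g₂])) ws → g.2 ≠ GK.inn →
    (∀ x ∈ l, ¬ OriginalGate T x) → OriginalGate T g₂ →
    ws.count WKind.adj = 1 := by
  induction l with
  | nil =>
    intro g g₂ ws hwalk hout _ horig
    match ws with
    | [] => exact absurd hwalk (by simp [IsWalk])
    | w :: ws' =>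
      obtain ⟨hwire, hrest⟩ := hwalk
      match ws' with
      | _ :: _ => exact absurd hrest (by simp [IsWalk])
      | [] =>
        cases w with
        | cp =>
          obtain ⟨S₁, S₂, k, hk, hch, _, hg₂⟩ := hwire
          have hc := (T.isChild_spec hWF hch).2
          exact absurd horig (hg₂ ▸ not_orig_canon T k hc)
        | pc =>
          obtain ⟨S₁, S₂, hch, hg, _⟩ := hwire
          have hc := (T.isChild_spec hWF hch).2
          rw [canon_of_card_ne (by omega)] at hg
          exact absurd (congrArg Prod.snd hg) hout
        | adj => simp
  | cons h l' ih =>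
    intro g g₂ ws hwalk hout hmid horig
    match ws with
    | [] => exact absurd hwalk (by simp [IsWalk])
    | w :: ws' =>
      obtain ⟨hwire, hrest⟩ := hwalk
      cases w with
      | cp =>
        obtain ⟨S₁, S₂, k, hk, hch, _, hh⟩ := hwire
        have hout' : h.2 ≠ GK.inn := hh ▸ canon_snd_ne_inn (by rcases hk with rfl | rfl <;> simp)
        have := ih h g₂ ws' hrest hout' (fun x hx => hmid x (List.mem_cons_of_mem _ hx)) horig
        simpa [this]
      | pc =>
        obtain ⟨S₁, S₂, hch, hg, _⟩ := hwire
        have hc := (T.isChild_spec hWF hch).2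
        rw [canon_of_card_ne (by omega)] at hg
        exact absurd (congrArg Prod.snd hg) hout
      | adj =>
        obtain ⟨S₁, S₂, hadj, _, hh⟩ := hwire
        have hB := T.isAdjArc_spec hWF hadj
        have hnext : OriginalGate T h ∨ h.2 = GK.inn := hh ▸ canon_orig_or_inn T hB
        have hno : ¬ OriginalGate T h := hmid h List.mem_cons_self
        have hin' : h.2 = GK.inn := hnext.resolve_left hno
        have := in_phase T hWF sel hsel l' h g₂ ws' hrest hin'
          (fun x hx => hmid x (List.mem_cons_of_mem _ hx)) horig
        simpa [this]

end Aux

/-- Every directed path of `F*` between two original gates whose internal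
vertices contain no original gates contains exactly one adjacency wire. -/
theorem fstar_connecting_path (T : SCD V) (hWF : T.WF)
    (sel : Finset V → Finset V → GK) (hsel : ∀ A B, sel A B ≠ GK.inn)
    (g₁ g₂ : Finset V × GK) (mid : List (Finset V × GK)) (ws : List WKind)
    (hwalk : IsWalk (wire T sel) (g₁ :: (mid ++ [g₂])) ws)
    (h₁ : OriginalGate T g₁) (h₂ : OriginalGate T g₂)
    (hmid : ∀ g ∈ mid, ¬ OriginalGate T g) :
    ws.count WKind.adj = 1 := by
  obtain ⟨v, _, rfl⟩ := h₁
  exact out_phase T hWF sel hsel mid _ g₂ ws hwalk (by simp) hmid h₂
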